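/- Let p be a prime, let F ∈ ℤ[x] be monic of degree m, and write F(j) = Σ_{n ≥ −m} a(n)qⁿ. Suppose there exists G ∈ ℤ[x] with F(j) | U(p) ≡ G(j) (mod p), and suppose a(−pn) ≡ 0 (mod p) for every integer n > 0. Then F(j) | U(p) ≡ a(0) (mod p), i.e. the reduction of G modulo p is the constant a(0) mod p. -/

import Mathlib

open scoped LaurentSeries

open Polynomial in
/-- `∏_{n≥1} (1 - qⁿ)^24`, as a formal power series: its `n`-th coefficient agrees with
that of the finite product `∏_{k=1}^{n} (1 - q^k)^24`. -/
noncomputable def etaPow24 : PowerSeries ℤ :=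
  PowerSeries.mk fun n =>
    PowerSeries.coeff n (∏ k ∈ Finset.range n, ((1 : PowerSeries ℤ) - PowerSeries.X ^ (k + 1)) ^ 24)

/-- The `q`-expansion of the normalized Eisenstein series `E₄ = 1 + 240 Σ_{n≥1} σ₃(n) qⁿ`. -/
noncomputable def E4 : PowerSeries ℤ :=
  PowerSeries.mk fun n => if n = 0 then 1 else 240 * ∑ d ∈ Nat.divisors n, (d : ℤ) ^ 3

/-- The formal `q`-expansion of the modular `j`-function:
`j = q⁻¹ · (1 + 240 Σ σ₃(n) qⁿ)³ · ∏_{n≥1}(1 - qⁿ)^{-24} = q⁻¹ + 744 + 196884 q + ⋯ ∈ ℤ((q))`.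
Its `n`-th coefficient is `c(n)`, accessed as `jq.coeff n`. -/
noncomputable def jq : LaurentSeries ℤ :=
  HahnSeries.single (-1 : ℤ) (1 : ℤ) *
    HahnSeries.ofPowerSeries ℤ ℤ (E4 ^ 3 * PowerSeries.invOfUnit etaPow24 1)

/-- The classical modular `j`-function on the complex upper half-plane (equal to
`1728·E₄³/(E₄³ - E₆²)`), given by its absolutely convergent `q`-expansion
`j(τ) = Σ_{n ≥ -1} c(n) e^{2πinτ}` (the sum over `n : ℕ` of the terms with exponent `n - 1`). -/
noncomputable def jUHP (τ : UpperHalfPlane) : ℂ :=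
  ∑' n : ℕ, (jq.coeff ((n : ℤ) - 1) : ℂ) *
    Complex.exp (2 * Real.pi * Complex.I * ((n : ℤ) - 1) * (τ : ℂ))

/-- The set of singular moduli of discriminant `-D`: the values `j(τ)` where `τ ∈ ℍ`
satisfies `aτ² + bτ + c = 0` with `a > 0`, `gcd(a,b,c) = 1`, `b² - 4ac = -D`. -/
def singularModuli (D : ℤ) : Set ℂ :=
  {z | ∃ τ : UpperHalfPlane, z = jUHP τ ∧ ∃ a b c : ℤ, 0 < a ∧ Int.gcd (Int.gcd a b) c = 1 ∧
    (a : ℂ) * (τ : ℂ) ^ 2 + (b : ℂ) * (τ : ℂ) + (c : ℂ) = 0 ∧ b ^ 2 - 4 * a * c = -D}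

/-- `H` is the Hilbert class polynomial `𝓗_D` of discriminant `-D`: the monic integer
polynomial whose image in `ℂ[x]` is the product of `(x - s)` over the (finitely many)
distinct singular moduli `s` of discriminant `-D`.  Its degree is then `h(-D)`. -/
def IsHilbertClassPoly (D : ℤ) (H : Polynomial ℤ) : Prop :=
  H.Monic ∧ ∃ S : Finset ℂ, (S : Set ℂ) = singularModuli D ∧
    H.map (Int.castRingHom ℂ) = ∏ s ∈ S, (Polynomial.X - Polynomial.C s)

/-- `d` is a fundamental discriminant (the discriminant of a quadratic field):
either `d ≡ 1 (mod 4)` and `d` is squarefree, or `d ≡ 0 (mod 4)`, `d/4` is squarefree,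
and `d/4 ≡ 2` or `3 (mod 4)`. -/
def IsFundamentalDiscriminant (d : ℤ) : Prop :=
  (d % 4 = 1 ∧ Squarefree d) ∨
    (d % 4 = 0 ∧ Squarefree (d / 4) ∧ (d / 4 % 4 = 2 ∨ d / 4 % 4 = 3))

open Classical in
/-- `j₀ ∈ F̄_p` is a supersingular `j`-invariant: `j₀ = j(E)` for an elliptic curve `E`
over `F̄_p` whose group of points `E(F̄_p)` has no point of order `p`. -/
def IsSupersingularJ (p : ℕ) [Fact p.Prime] (j₀ : AlgebraicClosure (ZMod p)) : Prop :=
  ∃ (W : WeierstrassCurve (AlgebraicClosure (ZMod p))) (h : W.IsElliptic),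
    @WeierstrassCurve.j _ _ W h = j₀ ∧ ∀ P : W.toAffine.Point, addOrderOf P ≠ p

/-- The substitution `q ↦ q^p` on formal Laurent series: `(qPow p f).coeff (p*n) = f.coeff n`
and all other coefficients vanish. -/
noncomputable def qPow (p : ℕ) (f : LaurentSeries ℤ) : LaurentSeries ℤ :=
  if hp : 0 < p then
    HahnSeries.embDomain
      (OrderEmbedding.ofStrictMono (fun n : ℤ => (p : ℤ) * n)
        (fun a b h => mul_lt_mul_of_pos_left h (by exact_mod_cast hp))) f
  else f

/-- The `q`-expansion of the Delta-function `Δ = q ∏_{n≥1}(1 - qⁿ)²⁴ = Σ_{n≥1} τ(n) qⁿ`;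
its `n`-th coefficient is Ramanujan's `τ(n)`. -/
noncomputable def Δq : PowerSeries ℤ := PowerSeries.X * etaPow24

lemma jq_pow_eq (i : ℕ) : jq ^ i = HahnSeries.single (-(i:ℤ)) (1:ℤ) *
    HahnSeries.ofPowerSeries ℤ ℤ ((E4 ^ 3 * PowerSeries.invOfUnit etaPow24 1) ^ i) := by
  rw [jq, mul_pow, HahnSeries.single_pow, one_pow, RingHom.map_pow]
  congr 1
  simp

lemma jq_pow_coeff (i : ℕ) (n : ℤ) :
    (jq ^ i).coeff n =
      (HahnSeries.ofPowerSeries ℤ ℤ ((E4 ^ 3 * PowerSeries.invOfUnit etaPow24 1) ^ i)).coeff (n + i) := by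
  rw [jq_pow_eq]
  have h : n = (n + i) + (-(i:ℤ)) := by ring
  conv_lhs => rw [h]
  rw [HahnSeries.coeff_single_mul_add, one_mul]

lemma ofPS_coeff_neg (f : PowerSeries ℤ) (n : ℤ) (h : n < 0) :
    (HahnSeries.ofPowerSeries ℤ ℤ f).coeff n = 0 := by
  rw [HahnSeries.ofPowerSeries_apply]
  apply HahnSeries.embDomain_notin_range
  rintro ⟨k, hk⟩
  have : ((k : ℤ)) = n := hk
  omega

lemma jq_pow_coeff_neg (i : ℕ) (n : ℤ) (h : n + i < 0) : (jq ^ i).coeff n = 0 := by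
  rw [jq_pow_coeff]; exact ofPS_coeff_neg _ _ h

lemma jq_pow_coeff_self (i : ℕ) : (jq ^ i).coeff (-(i:ℤ)) = 1 := by
  rw [jq_pow_coeff]
  have : (-(i:ℤ) + i) = ((0:ℕ) : ℤ) := by simp
  rw [this, HahnSeries.ofPowerSeries_apply_coeff, PowerSeries.coeff_zero_eq_constantCoeff_apply,
    map_pow, map_mul, map_pow]
  have h1 : PowerSeries.constantCoeff E4 = 1 := by
    simp [E4, PowerSeries.constantCoeff_mk]
  have h2 : PowerSeries.constantCoeff (PowerSeries.invOfUnit etaPow24 1) = 1 := by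
    rw [PowerSeries.constantCoeff_invOfUnit]; simp
  rw [h1, h2]; ring

lemma sum_coeff' {α : Type*} (s : Finset α) (f : α → LaurentSeries ℤ) (n : ℤ) :
    (∑ i ∈ s, f i).coeff n = ∑ i ∈ s, (f i).coeff n := by
  classical
  induction s using Finset.cons_induction with
  | empty => simp
  | cons a s ha ih => rw [Finset.sum_cons, Finset.sum_cons, HahnSeries.coeff_add, ih]

lemma aeval_coeff (G : Polynomial ℤ) (n : ℤ) :
    (Polynomial.aeval jq G).coeff n =
      ∑ i ∈ Finset.range (G.natDegree + 1), G.coeff i * (jq ^ i).coeff n := by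
  rw [Polynomial.aeval_eq_sum_range, sum_coeff']
  refine Finset.sum_congr rfl fun i _ => ?_
  rw [Algebra.smul_def]
  have halg : algebraMap ℤ (LaurentSeries ℤ) (G.coeff i) = ((G.coeff i : ℤ) : LaurentSeries ℤ) :=
    map_intCast _ _
  rw [halg]
  have hc : ((G.coeff i : ℤ) : LaurentSeries ℤ) = HahnSeries.C (G.coeff i) := by
    simp [map_intCast]
  rw [hc, HahnSeries.C_apply, HahnSeries.coeff_single_zero_mul]

/-- Let `p` be prime, `F ∈ ℤ[x]` monic of degree `m`, `F(j) = Σ a(n)qⁿ`.  If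
`F(j) | U(p) ≡ G(j) (mod p)` for some `G ∈ ℤ[x]` and `a(-pn) ≡ 0 (mod p)` for every
`n > 0`, then `F(j) | U(p) ≡ a(0) (mod p)`. -/
theorem Up_constant_of_negative_vanishing (p : ℕ) (hp : p.Prime)
    (F : Polynomial ℤ) (hF : F.Monic) (m : ℕ) (hm : F.natDegree = m)
    (G : Polynomial ℤ)
    (hG : ∀ n : ℤ, (p : ℤ) ∣
      ((Polynomial.aeval jq F).coeff ((p : ℤ) * n) - (Polynomial.aeval jq G).coeff n))
    (hneg : ∀ n : ℤ, 0 < n → (p : ℤ) ∣ (Polynomial.aeval jq F).coeff (-((p : ℤ) * n))) :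
    ∀ n : ℤ, n ≠ 0 → (p : ℤ) ∣ (Polynomial.aeval jq F).coeff ((p : ℤ) * n) := by
  set Gm := G.map (Int.castRingHom (ZMod p)) with hGm
  have hdvd_high : ∀ i : ℕ, Gm.natDegree < i → (p : ℤ) ∣ G.coeff i := by
    intro i hi
    have h0 : Gm.coeff i = 0 := Polynomial.coeff_eq_zero_of_natDegree_lt hi
    rw [hGm, Polynomial.coeff_map] at h0
    exact_mod_cast (ZMod.intCast_zmod_eq_zero_iff_dvd _ p).mp h0
  have key : ∀ n : ℤ, n ≠ 0 → (p : ℤ) ∣ (Polynomial.aeval jq G).coeff n := by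
    by_cases hd : Gm.natDegree = 0
    · intro n hn
      rw [aeval_coeff]
      apply Finset.dvd_sum
      intro i _
      rcases Nat.eq_zero_or_pos i with h0 | h1
      · subst h0
        simp [HahnSeries.coeff_one, hn]
      · exact Dvd.dvd.mul_right (hdvd_high i (by omega)) _
    · exfalso
      set d := Gm.natDegree with hdd
      have hGmne : Gm ≠ 0 := fun h => hd (by rw [hdd, h]; simp)
      have hcd : ¬ (p : ℤ) ∣ G.coeff d := by
        intro h
        have : Gm.coeff d = 0 := by
          rw [hGm, Polynomial.coeff_map]
          exact_mod_cast (ZMod.intCast_zmod_eq_zero_iff_dvd _ p).mpr h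
        exact Polynomial.leadingCoeff_ne_zero.mpr hGmne this
      have hdpos : (0 : ℤ) < (d : ℤ) := by exact_mod_cast Nat.pos_of_ne_zero hd
      have h3 := hneg d hdpos
      have h2 := hG (-(d : ℤ))
      have heq : (p : ℤ) * (-(d : ℤ)) = -((p : ℤ) * d) := by ring
      rw [heq] at h2
      have h1 : (p : ℤ) ∣ (Polynomial.aeval jq G).coeff (-(d : ℤ)) :=
        (dvd_sub_right h3).mp h2
      rw [aeval_coeff] at h1
      have hdle : d ≤ G.natDegree := Polynomial.natDegree_map_le
      have hmem : d ∈ Finset.range (G.natDegree + 1) := Finset.mem_range.mpr (by omega)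
      rw [← Finset.sum_erase_add _ _ hmem] at h1
      have hrest : (p : ℤ) ∣ ∑ i ∈ (Finset.range (G.natDegree + 1)).erase d,
          G.coeff i * (jq ^ i).coeff (-(d : ℤ)) := by
        apply Finset.dvd_sum
        intro i hi
        rcases lt_or_gt_of_ne (Finset.ne_of_mem_erase hi) with h | h
        · rw [jq_pow_coeff_neg i _ (by push_cast; omega)]
          simp
        · exact Dvd.dvd.mul_right (hdvd_high i h) _
      have hlast : (p : ℤ) ∣ G.coeff d * (jq ^ d).coeff (-(d : ℤ)) :=
        (dvd_add_right hrest).mp h1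
      rw [jq_pow_coeff_self, mul_one] at hlast
      exact hcd hlast
  intro n hn
  have h := hG n
  have h2 := key n hn
  have := dvd_add h h2
  rwa [sub_add_cancel] at this
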